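/- If M₁ and M₂ are positive semidefinite n×n matrices, then λ'(M₁ ∘ M₂) ≤ min{λ'(M₁), λ'(M₂)}, where ∘ is the Hadamard product and λ'(M) is the smallest constant c such that M ⪯ c·Diag(M). -/

import Mathlib

open Finset Matrix BigOperators

theorem schur_product_psd {n : ℕ} {A B : Matrix (Fin n) (Fin n) ℝ}
    (hA : A.PosSemidef) (hB : B.PosSemidef) : (A.hadamard B).PosSemidef := by
  obtain ⟨V, hV⟩ : ∃ V : Matrix (Fin n) (Fin n) ℝ, B = Vᴴ * V := by
    open scoped MatrixOrder in
    obtain ⟨V, hV⟩ := CStarAlgebra.nonneg_iff_eq_star_mul_self.mp hB.nonneg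
    exact ⟨V, by simpa [star_eq_conjTranspose] using hV⟩
  have hBapp : ∀ i j, B i j = ∑ k, V k i * V k j := by
    intro i j
    simp [hV, Matrix.mul_apply, Matrix.conjTranspose_apply]
  rw [posSemidef_iff_dotProduct_mulVec]
  constructor
  · ext i j
    have hAs : A j i = A i j := by
      have := congrFun (congrFun hA.1 i) j
      simpa [Matrix.conjTranspose_apply] using this
    have hBs : B j i = B i j := by
      have := congrFun (congrFun hB.1 i) j
      simpa [Matrix.conjTranspose_apply] using this
    simp [Matrix.conjTranspose_apply, Matrix.hadamard_apply, hAs, hBs]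
  · intro x
    have key : star x ⬝ᵥ (A.hadamard B) *ᵥ x
        = ∑ k, (fun i => x i * V k i) ⬝ᵥ A *ᵥ (fun i => x i * V k i) := by
      simp only [dotProduct, Matrix.mulVec, Matrix.hadamard_apply, star_trivial, hBapp,
        Finset.mul_sum, Finset.sum_mul]
      trans ∑ a : Fin n, ∑ c : Fin n, ∑ b : Fin n, x a * (A a b * (V c a * V c b) * x b)
      · exact Finset.sum_congr rfl fun a _ => Finset.sum_comm
      trans ∑ c : Fin n, ∑ a : Fin n, ∑ b : Fin n, x a * (A a b * (V c a * V c b) * x b)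
      · exact Finset.sum_comm
      exact Finset.sum_congr rfl fun c _ => Finset.sum_congr rfl fun a _ =>
        Finset.sum_congr rfl fun b _ => by ring
    rw [key]
    exact Finset.sum_nonneg fun k _ => hA.dotProduct_mulVec_nonneg _

theorem aux_lambda {n : ℕ} (M₁ M₂ : Matrix (Fin n) (Fin n) ℝ)
    (h₂ : M₂.PosSemidef) (c : ℝ)
    (hc : ((c • Matrix.diagonal (fun i => M₁ i i)) - M₁).PosSemidef) :
    ((c • Matrix.diagonal (fun i => (M₁.hadamard M₂) i i)) - M₁.hadamard M₂).PosSemidef := by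
  have h := schur_product_psd hc h₂
  have : ((c • Matrix.diagonal (fun i => M₁ i i)) - M₁).hadamard M₂
      = (c • Matrix.diagonal (fun i => (M₁.hadamard M₂) i i)) - M₁.hadamard M₂ := by
    ext i j
    by_cases hij : i = j
    · subst hij
      simp [Matrix.hadamard_apply, Matrix.sub_apply, Matrix.smul_apply, sub_mul, mul_assoc]
    · simp [Matrix.hadamard_apply, Matrix.sub_apply, Matrix.smul_apply,
        Matrix.diagonal_apply_ne _ hij, sub_mul]
  rwa [this] at h

theorem lambdaPrime_hadamard_le_min
    {n : ℕ} (M₁ M₂ : Matrix (Fin n) (Fin n) ℝ)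
    (h₁ : M₁.PosSemidef) (h₂ : M₂.PosSemidef) (c₁ c₂ : ℝ)
    (hc₁ : ((c₁ • Matrix.diagonal (fun i => M₁ i i)) - M₁).PosSemidef)
    (hc₂ : ((c₂ • Matrix.diagonal (fun i => M₂ i i)) - M₂).PosSemidef) :
    ((min c₁ c₂ •
        Matrix.diagonal (fun i => (M₁.hadamard M₂) i i)) - M₁.hadamard M₂).PosSemidef := by
  rcases le_total c₁ c₂ with h | h
  · rw [min_eq_left h]
    exact aux_lambda M₁ M₂ h₂ c₁ hc₁
  · rw [min_eq_right h]
    have := aux_lambda M₂ M₁ h₁ c₂ hc₂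
    rwa [Matrix.hadamard_comm] at this
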